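/- arXiv:2407.01526 — 4 statements merged into one kernel-verified Lean document; each statement's English description precedes it below -/
import Mathlib

section
/- Suppose λ = iu is purely imaginary (r = 0), the step size α is real (d = 0), and α is chosen as α = α'/u for a real constant α'. Then the characteristic polynomial of R_k simplifies to p(x) = −x³ + x²(2a − iα' + 1) + x(−a² + iaα' − 2a − b²) + a² + b², which does not depend on u. -/
open Complex in
theorem charpoly_Rk_imaginary_eig_real_step (a b u α' : ℝ) (hu : u > 0) :
    ∀ x : ℂ,
      (!![(a : ℂ), -(b : ℂ), -((u : ℂ) * I);
          (b : ℂ), (a : ℂ), 0;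
          ((a * (α' / u) : ℝ) : ℂ), -((b * (α' / u) : ℝ) : ℂ),
            1 - ((α' / u : ℝ) : ℂ) * ((u : ℂ) * I)] - x • (1 : Matrix (Fin 3) (Fin 3) ℂ)).det
      = -x ^ 3 + x ^ 2 * (2 * a - I * α' + 1)
        + x * (-(a : ℂ) ^ 2 + I * a * α' - 2 * a - (b : ℂ) ^ 2)
        + (a : ℂ) ^ 2 + (b : ℂ) ^ 2 := by
  intro x
  have hu' : (u : ℂ) ≠ 0 := by exact_mod_cast hu.ne'
  have hI : I ^ 2 = -1 := I_sq
  simp only [Matrix.det_fin_three, Matrix.sub_apply, Matrix.smul_apply,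
    Matrix.one_apply, Matrix.cons_val', Matrix.cons_val_zero, Matrix.cons_val_one,
    Matrix.head_cons, Matrix.head_fin_const, Matrix.cons_val_fin_one,
    Matrix.empty_val', Matrix.cons_val_two, Matrix.tail_cons, Matrix.of_apply]
  push_cast
  field_simp
  ring_nf
end

section
/- Let β = 0.986·exp(i(π − π/16)) and α' = 0.75. Every root of the cubic p(x) = x(Re(β)(iα' − 2) − |β|²) + x²(2Re(β) − iα' + 1) + |β|² − x³ has modulus strictly less than 1. -/
set_option maxHeartbeats 1000000

open Complex

private lemma sqrt_bnds {x l u : ℝ} (hl : 0 ≤ l) (hu : 0 ≤ u) (h1 : l ^ 2 ≤ x)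
    (h2 : x ≤ u ^ 2) : l ≤ Real.sqrt x ∧ Real.sqrt x ≤ u := by
  constructor
  · have := Real.sqrt_le_sqrt h1
    rwa [Real.sqrt_sq hl] at this
  · have := Real.sqrt_le_sqrt h2
    rwa [Real.sqrt_sq hu] at this

private lemma abs_le_parts (z : ℂ) (a b c : ℝ) (hz : z = (a : ℂ) + (b : ℂ) * I)
    (h : |a| + |b| ≤ c) : ‖z‖ ≤ c := by
  subst hz
  calc ‖(a : ℂ) + (b : ℂ) * I‖
      ≤ ‖(a : ℂ)‖ + ‖(b : ℂ) * I‖ := norm_add_le _ _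
    _ = |a| + |b| := by
        rw [norm_mul, Complex.norm_real, Complex.norm_real, Complex.norm_I, mul_one, Real.norm_eq_abs,
          Real.norm_eq_abs]
    _ ≤ c := h

private lemma abs_le_of_sq (z : ℂ) (a b c : ℝ) (hz : z = (a : ℂ) + (b : ℂ) * I)
    (hc : 0 ≤ c) (h : a ^ 2 + b ^ 2 ≤ c ^ 2) : ‖z‖ ≤ c := by
  subst hz
  rw [Complex.norm_def]
  have hn : Complex.normSq ((a : ℂ) + (b : ℂ) * I) = a ^ 2 + b ^ 2 := by
    simp [Complex.normSq_apply, Complex.add_re, Complex.add_im, Complex.mul_re,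
      Complex.mul_im, Complex.I_re, Complex.I_im, Complex.ofReal_re, Complex.ofReal_im]
    ring
  rw [hn]
  calc Real.sqrt (a ^ 2 + b ^ 2) ≤ Real.sqrt (c ^ 2) := Real.sqrt_le_sqrt h
    _ = c := Real.sqrt_sq hc

open Complex in
theorem roots_in_unit_disk_neg_phase :
    ∀ x : ℂ,
      (let β : ℂ := (0.986 : ℂ) * Complex.exp (I * ((Real.pi - Real.pi / 16 : ℝ) : ℂ));
       let α' : ℂ := (0.75 : ℂ);
       x * ((β.re : ℂ) * (I * α' - 2) - (‖β‖ : ℂ) ^ 2)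
         + x ^ 2 * (2 * β.re - I * α' + 1) + (‖β‖ : ℂ) ^ 2 - x ^ 3) = 0 →
      ‖x‖ < 1 := by
  intro x hx
  simp only at hx
  -- identify β.re and |β|
  have hre : ((0.986 : ℂ) * Complex.exp (I * ((Real.pi - Real.pi / 16 : ℝ) : ℂ))).re
      = 0.986 * Real.cos (Real.pi - Real.pi / 16) := by
    rw [mul_comm I]
    have h : (0.986 : ℂ) = ((0.986 : ℝ) : ℂ) := by norm_num
    rw [h, Complex.re_ofReal_mul, Complex.exp_ofReal_mul_I_re]
  have habs : ‖(0.986 : ℂ) * Complex.exp (I * ((Real.pi - Real.pi / 16 : ℝ) : ℂ))‖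
      = 0.986 := by
    rw [norm_mul, mul_comm I, Complex.norm_exp_ofReal_mul_I, mul_one]
    have h : (0.986 : ℂ) = ((0.986 : ℝ) : ℂ) := by norm_num
    rw [h, Complex.norm_real]
    norm_num
  rw [hre, habs] at hx
  rw [Complex.ofReal_mul] at hx
  have h986 : ((0.986 : ℝ) : ℂ) = 986 / 1000 := by norm_num
  have h34 : (0.75 : ℂ) = 3 / 4 := by norm_num
  rw [h986, h34] at hx
  -- bounds for cos (π - π/16) = - cos (π/16)
  have hs2 := sqrt_bnds (x := (2 : ℝ))
    (l := 176776695296636881100211 / 125000000000000000000000)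
    (u := 1414213562373095048801689 / 1000000000000000000000000)
    (by norm_num) (by norm_num) (by norm_num) (by norm_num)
  have hm2 := sqrt_bnds (x := (2 + Real.sqrt 2 : ℝ))
    (l := 923879532511286756128183 / 500000000000000000000000)
    (u := 1847759065022573512256367 / 1000000000000000000000000)
    (by norm_num) (by norm_num) (by nlinarith [hs2.1]) (by nlinarith [hs2.2])
  have hc16 := sqrt_bnds (x := (2 + Real.sqrt (2 + Real.sqrt 2) : ℝ))
    (l := 490392640201615224563091 / 250000000000000000000000)
    (u := 980785280403230449126183 / 500000000000000000000000)
    (by norm_num) (by norm_num) (by nlinarith [hm2.1]) (by nlinarith [hm2.2])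
  have hcos : Real.cos (Real.pi - Real.pi / 16)
      = -(Real.sqrt (2 + Real.sqrt (2 + Real.sqrt 2)) / 2) := by
    rw [Real.cos_pi_sub, Real.cos_pi_div_sixteen]
  have hcb1 : (-(980785280403230449126183 / 1000000000000000000000000) : ℝ)
      ≤ Real.cos (Real.pi - Real.pi / 16) := by
    rw [hcos]; linarith [hc16.2]
  have hcb2 : Real.cos (Real.pi - Real.pi / 16)
      ≤ (-(490392640201615224563091 / 500000000000000000000000) : ℝ) := by
    rw [hcos]; linarith [hc16.1]
  -- make cos opaque
  generalize hgen : Real.cos (Real.pi - Real.pi / 16) = cr at hx hcb1 hcb2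
  -- bounds for rr := 0.986 * cr
  have hr1 : (-(483527143238792611419208219 / 500000000000000000000000000) : ℝ)
      ≤ 986 / 1000 * cr := by nlinarith
  have hr2 : (986 / 1000 * cr : ℝ)
      ≤ -(241763571619396305709603863 / 250000000000000000000000000) := by nlinarith
  -- the three approximate roots
  set x1 : ℂ := 925696591169900279 / 1000000000000000000
      - 377735424207110628 / 1000000000000000000 * I with hx1
  set x2 : ℂ := -(969477816762237872 / 1000000000000000000)
      + 81846929287505577 / 1000000000000000000 * I with hx2
  set x3 : ℂ := -(890327347362832853 / 1000000000000000000)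
      - 454111505080394949 / 1000000000000000000 * I with hx3
  set E2 : ℂ := (2 * (986 / 1000) * (cr : ℂ) + 1 - I * (3 / 4)) - (x1 + x2 + x3) with hE2
  set E1 : ℂ := (986 / 1000) * (cr : ℂ) * (I * (3 / 4) - 2) - (986 / 1000) ^ 2
      + (x1 * x2 + x1 * x3 + x2 * x3) with hE1
  set E0 : ℂ := (986 / 1000 : ℂ) ^ 2 - x1 * x2 * x3 with hE0
  have hkey : (x - x1) * (x - x2) * (x - x3) = E2 * x ^ 2 + E1 * x + E0 := by
    rw [hE2, hE1, hE0]
    linear_combination -hx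
  -- coefficient bounds
  have hb2 : ‖E2‖ ≤ 1 / 10 ^ 14 := by
    apply abs_le_parts _ (2 * (986 / 1000 * cr) + 967054286477585223 / 500000000000000000) 0
    · rw [hE2, hx1, hx2, hx3]; push_cast; ring
    · have ha : |2 * (986 / 1000 * cr) + 967054286477585223 / 500000000000000000|
          ≤ 1 / 10 ^ 14 := by
        rw [abs_le]; constructor <;> nlinarith [hr1, hr2]
      simpa using ha
  have hb1 : ‖E1‖ ≤ 1 / 10 ^ 14 := by
    apply abs_le_parts _
      (-2 * (986 / 1000 * cr)
        - 967054286477585222859521424939569251 / 500000000000000000000000000000000000)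
      (3 / 4 * (986 / 1000 * cr)
        + 725290714858188917224249159969217859 / 1000000000000000000000000000000000000)
      (1 / 10 ^ 14)
    · rw [hE1, hx1, hx2, hx3]
      push_cast
      linear_combination (103449885209449338218893641569315043 /
        1000000000000000000000000000000000000 : ℂ) * Complex.I_sq
    · have ha : |(-2 * (986 / 1000 * cr)
          - 967054286477585222859521424939569251 / 500000000000000000000000000000000000 : ℝ)|
          ≤ 5 / 10 ^ 15 := by
        rw [abs_le]; constructor <;> nlinarith [hr1, hr2]
      have hb : |(3 / 4 * (986 / 1000 * cr)
          + 725290714858188917224249159969217859 / 1000000000000000000000000000000000000 : ℝ)|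
          ≤ 5 / 10 ^ 15 := by
        rw [abs_le]; constructor <;> nlinarith [hr1, hr2]
      linarith
  have hb0 : ‖E0‖ ≤ 1 / 10 ^ 14 := by
    apply abs_le_parts _
      (-(436499463503399017286919220060813447 / 1000000000000000000000000000000000000000000000000000000))
      (147075560828514611564655495247756479 / 1000000000000000000000000000000000000000000000000000000)
      (1 / 10 ^ 14)
    · rw [hE0, hx1, hx2, hx3]
      push_cast
      linear_combination ((173178568555903825181041609098728425034798626510353783 /
        1000000000000000000000000000000000000000000000000000000 : ℂ)
        - (3509882833205755939139061510504646946820094164007461 /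
        250000000000000000000000000000000000000000000000000000 : ℂ) * I) * Complex.I_sq
    · rw [_root_.abs_of_nonpos (by norm_num), _root_.abs_of_nonneg (by norm_num)]; norm_num
  -- upper bounds on the approximate roots
  have ha1 : ‖x1‖ ≤ 249949773655191 / 250000000000000 := by
    apply abs_le_of_sq _ (925696591169900279 / 1000000000000000000)
      (-(377735424207110628 / 1000000000000000000)) _
      (by rw [hx1]; push_cast; ring) (by norm_num) (by norm_num)
  have ha2 : ‖x2‖ ≤ 9729265938537549 / 10000000000000000 := by
    apply abs_le_of_sq _ (-(969477816762237872 / 1000000000000000000))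
      (81846929287505577 / 1000000000000000000) _
      (by rw [hx2]; push_cast; ring) (by norm_num) (by norm_num)
  have ha3 : ‖x3‖ ≤ 199889974186653 / 200000000000000 := by
    apply abs_le_of_sq _ (-(890327347362832853 / 1000000000000000000))
      (-(454111505080394949 / 1000000000000000000)) _
      (by rw [hx3]; push_cast; ring) (by norm_num) (by norm_num)
  -- main argument
  by_contra hcon
  push_neg at hcon
  set t : ℝ := ‖x‖ with ht
  have ht1 : (1 : ℝ) ≤ t := hcon
  have hl1 : t - 249949773655191 / 250000000000000 ≤ ‖x - x1‖ := by
    have h := norm_add_le (x - x1) x1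
    rw [sub_add_cancel] at h
    linarith
  have hl2 : t - 9729265938537549 / 10000000000000000 ≤ ‖x - x2‖ := by
    have h := norm_add_le (x - x2) x2
    rw [sub_add_cancel] at h
    linarith
  have hl3 : t - 199889974186653 / 200000000000000 ≤ ‖x - x3‖ := by
    have h := norm_add_le (x - x3) x3
    rw [sub_add_cancel] at h
    linarith
  have hn1 : (0 : ℝ) ≤ t - 249949773655191 / 250000000000000 := by linarith
  have hn2 : (0 : ℝ) ≤ t - 9729265938537549 / 10000000000000000 := by linarith
  have hn3 : (0 : ℝ) ≤ t - 199889974186653 / 200000000000000 := by linarith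
  have hprod : (t - 249949773655191 / 250000000000000)
      * (t - 9729265938537549 / 10000000000000000)
      * (t - 199889974186653 / 200000000000000)
      ≤ ‖(x - x1) * (x - x2) * (x - x3)‖ := by
    rw [norm_mul, norm_mul]
    apply mul_le_mul _ hl3 hn3 (by positivity)
    exact mul_le_mul hl1 hl2 hn2 (norm_nonneg _)
  have hrhs : ‖(x - x1) * (x - x2) * (x - x3)‖
      ≤ 1 / 10 ^ 14 * (t ^ 2 + t + 1) := by
    rw [hkey]
    calc ‖E2 * x ^ 2 + E1 * x + E0‖
        ≤ ‖E2 * x ^ 2 + E1 * x‖ + ‖E0‖ := norm_add_le _ _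
      _ ≤ ‖E2 * x ^ 2‖ + ‖E1 * x‖ + ‖E0‖ := by
          linarith [norm_add_le (E2 * x ^ 2) (E1 * x)]
      _ = ‖E2‖ * t ^ 2 + ‖E1‖ * t + ‖E0‖ := by
          rw [norm_mul, norm_mul, norm_pow]
      _ ≤ 1 / 10 ^ 14 * (t ^ 2 + t + 1) := by
          have h2 : (0:ℝ) ≤ t ^ 2 := sq_nonneg t
          have h3 : (0:ℝ) ≤ t := norm_nonneg x
          nlinarith [hb2, hb1, hb0]
  have hfin : (t - 249949773655191 / 250000000000000)
      * (t - 9729265938537549 / 10000000000000000)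
      * (t - 199889974186653 / 200000000000000)
      ≤ 1 / 10 ^ 14 * (t ^ 2 + t + 1) := le_trans hprod hrhs
  have h0 : (0 : ℝ) ≤ t - 1 := by linarith
  nlinarith [mul_nonneg h0 h0, mul_nonneg (mul_nonneg h0 h0) h0, hfin]
end

section
/- Let β = 0.9·exp(iπ/16) and α' = 0.025. Every root of the cubic p(x) = x(Re(β)(iα' − 2) − |β|²) + x²(2Re(β) − iα' + 1) + |β|² − x³ has modulus strictly less than 1 (in fact at most ≈0.973). -/
set_option maxHeartbeats 1000000

open Real in
lemma cos_pi16_bounds : 0.9807852804 ≤ Real.cos (Real.pi/16) ∧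
    Real.cos (Real.pi/16) ≤ 0.9807852805 := by
  have h2l : (1.4142135623 : ℝ) ≤ √2 := by
    rw [show (1.4142135623:ℝ) = √(1.4142135623^2) from (Real.sqrt_sq (by norm_num)).symm]
    exact Real.sqrt_le_sqrt (by norm_num)
  have h2u : √2 ≤ (1.4142135624 : ℝ) := by
    rw [show (1.4142135624:ℝ) = √(1.4142135624^2) from (Real.sqrt_sq (by norm_num)).symm]
    exact Real.sqrt_le_sqrt (by norm_num)
  have h4l : (1.8477590650 : ℝ) ≤ √(2+√2) := by
    rw [show (1.8477590650:ℝ) = √(1.8477590650^2) from (Real.sqrt_sq (by norm_num)).symm]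
    exact Real.sqrt_le_sqrt (by nlinarith)
  have h4u : √(2+√2) ≤ (1.8477590651 : ℝ) := by
    rw [show (1.8477590651:ℝ) = √(1.8477590651^2) from (Real.sqrt_sq (by norm_num)).symm]
    exact Real.sqrt_le_sqrt (by nlinarith)
  have h8l : (1.9615705608 : ℝ) ≤ √(2+√(2+√2)) := by
    rw [show (1.9615705608:ℝ) = √(1.9615705608^2) from (Real.sqrt_sq (by norm_num)).symm]
    exact Real.sqrt_le_sqrt (by nlinarith)
  have h8u : √(2+√(2+√2)) ≤ (1.9615705610 : ℝ) := by
    rw [show (1.9615705610:ℝ) = √(1.9615705610^2) from (Real.sqrt_sq (by norm_num)).symm]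
    exact Real.sqrt_le_sqrt (by nlinarith)
  rw [Real.cos_pi_div_sixteen]
  constructor <;> nlinarith

open Complex in
theorem roots_in_unit_disk_pos_phase :
    ∀ x : ℂ,
      (let β : ℂ := (0.9 : ℂ) * Complex.exp (I * ((Real.pi / 16 : ℝ) : ℂ));
       let α' : ℂ := (0.025 : ℂ);
       x * ((β.re : ℂ) * (I * α' - 2) - (‖β‖ : ℂ) ^ 2)
         + x ^ 2 * (2 * β.re - I * α' + 1) + (‖β‖ : ℂ) ^ 2 - x ^ 3) = 0 →
      ‖x‖ < 1 := by
  intro x h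
  simp only at h
  have hre : ((0.9 : ℂ) * Complex.exp (I * ((Real.pi / 16 : ℝ) : ℂ))).re
      = (9/10) * Real.cos (Real.pi/16) := by
    rw [mul_comm I, Complex.exp_mul_I, ← Complex.ofReal_cos, ← Complex.ofReal_sin]
    simp only [Complex.mul_re, Complex.add_re, Complex.add_im, Complex.ofReal_re,
      Complex.ofReal_im, Complex.mul_im, Complex.I_re, Complex.I_im]
    norm_num
  have habs : ‖(0.9 : ℂ) * Complex.exp (I * ((Real.pi / 16 : ℝ) : ℂ))‖ = 9/10 := by
    rw [norm_mul, Complex.norm_exp]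
    norm_num
  rw [hre, habs] at h
  set C : ℝ := Real.cos (Real.pi/16) with hCdef
  obtain ⟨hCl, hCu⟩ := cos_pi16_bounds
  -- approximate roots
  set ρ1 : ℂ := ((9703485/10000000 : ℝ) : ℂ) - ((706688/10000000 : ℝ) : ℂ)*I with hρ1
  set ρ2 : ℂ := ((8399486/10000000 : ℝ) : ℂ) + ((1920096/10000000 : ℝ) : ℂ)*I with hρ2
  set ρ3 : ℂ := ((9551164/10000000 : ℝ) : ℂ) - ((1463408/10000000 : ℝ) : ℂ)*I with hρ3
  -- error coefficients
  set e2 : ℂ := (((9/5)*C - 17654135/10000000 : ℝ) : ℂ) with he2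
  set e1 : ℂ := ((-(9/5)*C + 176541351093466/100000000000000 : ℝ) : ℂ)
      + (((9/400)*C - 2206767006064/100000000000000 : ℝ) : ℂ)*I with he1
  set e0 : ℂ := ((-9890844172648/1000000000000000000000 : ℝ) : ℂ)
      + ((3367468511776/1000000000000000000000 : ℝ) : ℂ)*I with he0
  have key : (x - ρ1) * (x - ρ2) * (x - ρ3) = e2*x^2 + e1*x + e0 := by
    rw [hρ1, hρ2, hρ3, he2, he1, he0]
    push_cast at h ⊢
    linear_combination (norm := (push_cast; ring1)) (-1 : ℂ) * h +
      ((61600007223210809/1953125000000000000 : ℂ)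
        - (30299548281669/15258789062500000 : ℂ) * I
        - (6118398001/195312500000 : ℂ) * x) * Complex.I_sq
  -- coefficient bounds
  have he2b : ‖e2‖ ≤ 5e-9 := by
    rw [he2, Complex.norm_real, Real.norm_eq_abs, abs_le]
    constructor <;> nlinarith
  have he1b : ‖e1‖ ≤ 8e-9 := by
    rw [he1]
    refine le_trans (norm_add_le _ _) ?_
    rw [norm_mul, Complex.norm_I, mul_one, Complex.norm_real, Real.norm_eq_abs, Complex.norm_real, Real.norm_eq_abs]
    have hA : |(-(9/5) * C + 176541351093466/100000000000000 : ℝ)| ≤ 65e-10 :=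
      abs_le.mpr ⟨by nlinarith, by nlinarith⟩
    have hB : |(9/400 * C - 2206767006064/100000000000000 : ℝ)| ≤ 13e-10 :=
      abs_le.mpr ⟨by nlinarith, by nlinarith⟩
    linarith
  have he0b : ‖e0‖ ≤ 14e-9 := by
    rw [he0]
    refine le_trans (norm_add_le _ _) ?_
    rw [norm_mul, Complex.norm_I, mul_one, Complex.norm_real, Real.norm_eq_abs, Complex.norm_real, Real.norm_eq_abs]
    rw [_root_.abs_of_nonpos (by norm_num), _root_.abs_of_nonneg (by norm_num)]
    norm_num
  -- root modulus bounds
  have hρ1b : ‖ρ1‖ ≤ 0.972919 := by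
    have hn : Complex.normSq ρ1 ≤ 0.972919^2 := by
      rw [hρ1, Complex.normSq_apply]
      simp only [Complex.sub_re, Complex.sub_im, Complex.add_re, Complex.add_im,
        Complex.ofReal_re, Complex.ofReal_im, Complex.mul_re, Complex.mul_im,
        Complex.I_re, Complex.I_im]
      norm_num
    nlinarith [Complex.sq_norm ρ1, norm_nonneg ρ1]
  have hρ2b : ‖ρ2‖ ≤ 0.861617 := by
    have hn : Complex.normSq ρ2 ≤ 0.861617^2 := by
      rw [hρ2, Complex.normSq_apply]
      simp only [Complex.sub_re, Complex.sub_im, Complex.add_re, Complex.add_im,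
        Complex.ofReal_re, Complex.ofReal_im, Complex.mul_re, Complex.mul_im,
        Complex.I_re, Complex.I_im]
      norm_num
    nlinarith [Complex.sq_norm ρ2, norm_nonneg ρ2]
  have hρ3b : ‖ρ3‖ ≤ 0.966263 := by
    have hn : Complex.normSq ρ3 ≤ 0.966263^2 := by
      rw [hρ3, Complex.normSq_apply]
      simp only [Complex.sub_re, Complex.sub_im, Complex.add_re, Complex.add_im,
        Complex.ofReal_re, Complex.ofReal_im, Complex.mul_re, Complex.mul_im,
        Complex.I_re, Complex.I_im]
      norm_num
    nlinarith [Complex.sq_norm ρ3, norm_nonneg ρ3]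
  -- suppose |x| ≥ 1
  by_contra hc
  push_neg at hc
  set R : ℝ := ‖x‖ with hR
  -- triangle bounds
  have t1 : R - 0.972919 ≤ ‖x - ρ1‖ := by
    have := norm_add_le (x - ρ1) ρ1
    rw [sub_add_cancel] at this
    linarith
  have t2 : R - 0.861617 ≤ ‖x - ρ2‖ := by
    have := norm_add_le (x - ρ2) ρ2
    rw [sub_add_cancel] at this
    linarith
  have t3 : R - 0.966263 ≤ ‖x - ρ3‖ := by
    have := norm_add_le (x - ρ3) ρ3
    rw [sub_add_cancel] at this
    linarith
  have hp1 : (0:ℝ) < R - 0.972919 := by linarith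
  have hp2 : (0:ℝ) < R - 0.861617 := by linarith
  have hp3 : (0:ℝ) < R - 0.966263 := by linarith
  -- lower bound on product
  have hlow : (R - 0.972919) * (R - 0.861617) * (R - 0.966263)
      ≤ ‖(x - ρ1) * (x - ρ2) * (x - ρ3)‖ := by
    rw [norm_mul, norm_mul]
    have := mul_le_mul (mul_le_mul t1 t2 (le_of_lt hp2) (norm_nonneg _)) t3
      (le_of_lt hp3) (mul_nonneg (norm_nonneg _) (norm_nonneg _))
    linarith
  -- upper bound on RHS
  have hup : ‖e2 * x ^ 2 + e1 * x + e0‖ ≤ 5e-9 * R^2 + 8e-9 * R + 14e-9 := by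
    refine le_trans (norm_add_le _ _) (le_trans (add_le_add_left
      (norm_add_le _ _) _) ?_)
    rw [norm_mul, norm_mul, norm_pow]
    have h1 : ‖e2‖ * R^2 ≤ 5e-9 * R^2 :=
      mul_le_mul_of_nonneg_right he2b (sq_nonneg R)
    have h2 : ‖e1‖ * R ≤ 8e-9 * R :=
      mul_le_mul_of_nonneg_right he1b (norm_nonneg x)
    linarith
  rw [key] at hlow
  have hfin : (R - 0.972919) * (R - 0.861617) * (R - 0.966263)
      ≤ 5e-9 * R^2 + 8e-9 * R + 14e-9 := le_trans hlow hup
  have ht : (0:ℝ) ≤ R - 1 := by linarith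
  nlinarith [hfin, ht, mul_nonneg ht ht, mul_nonneg (mul_nonneg ht ht) ht]
end

section
/- Consider simultaneous gradient descent with classical real momentum β ∈ [0,1) and real step size α > 0 on the bilinear game with joint-gradient Jacobian eigenvalue λ = iu, u ≠ 0. Then the spectral radius of the 2×2 per-eigenspace update matrix [[β, −λ], [αβ, 1 − αλ]] is at least 1; hence simultaneous gradient descent with nonnegative real momentum does not converge on purely adversarial bilinear games. -/
open Complex in
theorem real_momentum_fails_bilinear (β α u : ℝ) (hβ : 0 ≤ β) (hβ1 : β < 1)
    (hα : 0 < α) (hu : u ≠ 0) :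
    ∃ μ : ℂ,
      (!![(β : ℂ), -((u : ℂ) * I);
          ((α * β : ℝ) : ℂ), 1 - (α : ℂ) * ((u : ℂ) * I)]
        - μ • (1 : Matrix (Fin 2) (Fin 2) ℂ)).det = 0 ∧ 1 ≤ ‖μ‖ := by
  set s : ℂ := (1 + (β : ℂ)) - (α : ℂ) * ((u : ℂ) * I) with hs
  obtain ⟨z, hz⟩ := IsAlgClosed.exists_pow_nat_eq (s ^ 2 - 4 * (β : ℂ)) (n := 2) (by norm_num)
  set μp : ℂ := (s + z) / 2 with hμp
  set μm : ℂ := (s - z) / 2 with hμm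
  clear_value s μp μm
  have hdet : ∀ μ : ℂ,
      (!![(β : ℂ), -((u : ℂ) * I);
          ((α * β : ℝ) : ℂ), 1 - (α : ℂ) * ((u : ℂ) * I)]
        - μ • (1 : Matrix (Fin 2) (Fin 2) ℂ)).det
      = μ ^ 2 - s * μ + (β : ℂ) := by
    intro μ
    simp [Matrix.det_fin_two, Matrix.one_apply, hs]
    push_cast
    ring
  have hdp : μp ^ 2 - s * μp + (β : ℂ) = 0 := by
    rw [hμp]; linear_combination (1/4 : ℂ) * hz
  have hdm : μm ^ 2 - s * μm + (β : ℂ) = 0 := by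
    rw [hμm]; linear_combination (1/4 : ℂ) * hz
  have hprod : μp * μm = (β : ℂ) := by
    rw [hμp, hμm]; linear_combination (-1/4 : ℂ) * hz
  have hsum : μp + μm = s := by rw [hμp, hμm]; ring
  have hre : μp.re + μm.re = 1 + β := by
    have h' : (μp + μm).re = s.re := by rw [hsum]
    simpa [hs] using h'
  have habs : ‖μp‖ * ‖μm‖ = β := by
    rw [← norm_mul, hprod, Complex.norm_real, Real.norm_of_nonneg hβ]
  by_contra h
  push_neg at h
  have h1 : ‖μp‖ < 1 := h μp (by rw [hdet]; exact hdp)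
  have h2 : ‖μm‖ < 1 := h μm (by rw [hdet]; exact hdm)
  have r1 : μp.re ≤ ‖μp‖ := Complex.re_le_norm μp
  have r2 : μm.re ≤ ‖μm‖ := Complex.re_le_norm μm
  nlinarith [norm_nonneg μp, norm_nonneg μm]
end
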